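/- If (A,B) is a critical point of φ(A,B) = g(AᵀB) + (λ/2)(‖A‖_F² + ‖B‖_F²), where g is differentiable and λ > 0, then AAᵀ = BBᵀ. -/

import Mathlib

open Matrix

attribute [local instance] Matrix.normedAddCommGroup Matrix.normedSpace

/-- Frobenius inner product of two real matrices. -/
noncomputable def frobInner {m n : Type*} [Fintype m] [Fintype n]
    (A B : Matrix m n ℝ) : ℝ :=
  ∑ i, ∑ j, A i j * B i j

theorem critical_point_gram_eq {d m n : ℕ}
    (g : Matrix (Fin m) (Fin n) ℝ → ℝ)
    (G : Matrix (Fin m) (Fin n) ℝ → Matrix (Fin m) (Fin n) ℝ)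
    (hg : Differentiable ℝ g)
    (hG : ∀ D H, fderiv ℝ g D H = frobInner (G D) H)
    (lam : ℝ) (hlam : 0 < lam)
    (A : Matrix (Fin d) (Fin m) ℝ) (B : Matrix (Fin d) (Fin n) ℝ)
    (hA : lam • A = -(B * (G (Aᵀ * B))ᵀ))
    (hB : lam • B = -(A * G (Aᵀ * B))) :
    A * Aᵀ = B * Bᵀ := by
  set M := G (Aᵀ * B) with hM
  have hAG : A * M = -(lam • B) := by
    rw [hB]; simp
  have key : lam • (A * Aᵀ) = lam • (B * Bᵀ) := by
    calc lam • (A * Aᵀ) = (lam • A) * Aᵀ := by rw [Matrix.smul_mul]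
    _ = -(B * Mᵀ) * Aᵀ := by rw [hA]
    _ = -(B * (A * M)ᵀ) := by
        rw [Matrix.transpose_mul, Matrix.neg_mul, Matrix.mul_assoc]
    _ = -(B * (-(lam • B))ᵀ) := by rw [hAG]
    _ = lam • (B * Bᵀ) := by
        rw [Matrix.transpose_neg, Matrix.transpose_smul, Matrix.mul_neg,
          Matrix.mul_smul, neg_neg]
  exact smul_right_injective _ (ne_of_gt hlam) key
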